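/- Let g be a finite-dimensional real Lie algebra endowed with an Abelian linear D-complex structure K. Then K is linear C∞-pure at the 2nd stage, i.e., H^{2+}_K(g;ℝ) ∩ H^{2−}_K(g;ℝ) = {0}. -/

import Mathlib

open scoped BigOperators

noncomputable section ChevalleyEilenberg

variable (g : Type*) [LieRing g] [LieAlgebra ℝ g]

/-- The Chevalley–Eilenberg differential of an alternating `k`-form on a real Lie
algebra, as a function on `(k+1)`-tuples:
`(dα)(x_0,…,x_k) = Σ_{i<j} (−1)^{i+j} α([x_i,x_j], x_0,…,x̂_i,…,x̂_j,…,x_k)`. -/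
def ceD : {k : ℕ} → AlternatingMap ℝ g ℝ (Fin k) → ((Fin (k + 1) → g) → ℝ)
  | 0, _ => 0
  | (k + 1), α => fun x =>
      ∑ i : Fin (k + 2), ∑ j : Fin (k + 2),
        if hij : (i : ℕ) < (j : ℕ) then
          (-1 : ℝ) ^ ((i : ℕ) + (j : ℕ)) *
            α (fun m : Fin (k + 1) =>
                if hm : (m : ℕ) = 0 then ⁅x i, x j⁆
                else
                  x (j.succAbove
                      ((⟨(i : ℕ), by omega⟩ : Fin (k + 1)).succAbove
                        (⟨(m : ℕ) - 1, by omega⟩ : Fin k))))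
        else 0

theorem ceD_zero {k : ℕ} : ceD g (0 : AlternatingMap ℝ g ℝ (Fin k)) = 0 := by
  cases k with
  | zero => rfl
  | succ k => funext x; simp [ceD]

theorem ceD_add {k : ℕ} (α β : AlternatingMap ℝ g ℝ (Fin k)) :
    ceD g (α + β) = ceD g α + ceD g β := by
  cases k with
  | zero => funext x; simp [ceD]
  | succ k =>
    funext x
    simp only [ceD, Pi.add_apply, AlternatingMap.add_apply]
    rw [← Finset.sum_add_distrib]
    refine Finset.sum_congr rfl fun i _ => ?_
    rw [← Finset.sum_add_distrib]
    refine Finset.sum_congr rfl fun j _ => ?_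
    split
    · ring
    · ring

theorem ceD_smul {k : ℕ} (c : ℝ) (α : AlternatingMap ℝ g ℝ (Fin k)) :
    ceD g (c • α) = c • ceD g α := by
  cases k with
  | zero => funext x; simp [ceD]
  | succ k =>
    funext x
    simp only [ceD, Pi.smul_apply, AlternatingMap.smul_apply, smul_eq_mul,
      Finset.mul_sum]
    refine Finset.sum_congr rfl fun i _ => ?_
    refine Finset.sum_congr rfl fun j _ => ?_
    split
    · ring
    · ring

/-- The space of `d`-closed `k`-forms. -/
def Zsub (k : ℕ) : Submodule ℝ (AlternatingMap ℝ g ℝ (Fin k)) where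
  carrier := {α | ceD g α = 0}
  add_mem' := by
    intro a b ha hb
    simp only [Set.mem_setOf_eq] at *
    rw [ceD_add, ha, hb, add_zero]
  zero_mem' := by
    simpa only [Set.mem_setOf_eq] using ceD_zero g
  smul_mem' := by
    intro c a ha
    simp only [Set.mem_setOf_eq] at *
    rw [ceD_smul, ha, smul_zero]

/-- The space of `d`-exact `k`-forms. -/
def Bsub : (k : ℕ) → Submodule ℝ (AlternatingMap ℝ g ℝ (Fin k))
  | 0 => ⊥
  | (k + 1) =>
    { carrier := {α | ∃ β : AlternatingMap ℝ g ℝ (Fin k), ceD g β = ⇑α}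
      add_mem' := by
        rintro a b ⟨βa, hβa⟩ ⟨βb, hβb⟩
        exact ⟨βa + βb, by rw [ceD_add, hβa, hβb]; ext x; simp⟩
      zero_mem' := ⟨0, by rw [ceD_zero]; ext x; simp⟩
      smul_mem' := by
        rintro c a ⟨β, hβ⟩
        exact ⟨c • β, by rw [ceD_smul, hβ]; rfl⟩ }

instance instAddCommGroupZsub (k : ℕ) : AddCommGroup ↥(Zsub g k) := inferInstance

/-- The `k`-th Lie algebra cohomology `H^k(g;ℝ) = ker d / im d`. -/
abbrev Hcoh (k : ℕ) : Type _ :=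
  ↥(Zsub g k) ⧸ (Bsub g k).comap (Zsub g k).subtype

/-- The cohomology class of a `d`-closed `k`-form. -/
def cls {k : ℕ} (α : AlternatingMap ℝ g ℝ (Fin k)) (hα : ceD g α = 0) : Hcoh g k :=
  Submodule.Quotient.mk (⟨α, hα⟩ : Zsub g k)

/-- The subgroup `H^{k+}_K(g;ℝ)` of classes admitting a `d`-closed `K`-invariant
representative.  (The set of such classes is a linear subspace, so taking its span
does not enlarge it.) -/
def Hplus (K : g →ₗ[ℝ] g) (k : ℕ) : Submodule ℝ (Hcoh g k) :=
  Submodule.span ℝ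
    {c | ∃ (α : AlternatingMap ℝ g ℝ (Fin k)) (hα : ceD g α = 0),
        α.compLinearMap K = α ∧ c = cls g α hα}

/-- The subgroup `H^{k−}_K(g;ℝ)` of classes admitting a `d`-closed
`K`-anti-invariant representative. -/
def Hminus (K : g →ₗ[ℝ] g) (k : ℕ) : Submodule ℝ (Hcoh g k) :=
  Submodule.span ℝ
    {c | ∃ (α : AlternatingMap ℝ g ℝ (Fin k)) (hα : ceD g α = 0),
        α.compLinearMap K = -α ∧ c = cls g α hα}

/-- The wedge product of `k` linear functionals, as an alternating `k`-form. -/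
def wedge {k : ℕ} (fs : Fin k → (g →ₗ[ℝ] ℝ)) :
    AlternatingMap ℝ g ℝ (Fin k) :=
  MultilinearMap.alternatization
    ((MultilinearMap.mkPiAlgebra ℝ (Fin k) ℝ).compLinearMap fs)

end ChevalleyEilenberg

section Aux

variable (g : Type*) [LieRing g] [LieAlgebra ℝ g]

theorem cls_add {k : ℕ} (α β : AlternatingMap ℝ g ℝ (Fin k))
    (hα : ceD g α = 0) (hβ : ceD g β = 0) (h : ceD g (α + β) = 0) :
    cls g α hα + cls g β hβ = cls g (α + β) h := by
  show _ = Submodule.Quotient.mk _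
  rw [cls, cls, ← Submodule.Quotient.mk_add]
  rfl

theorem cls_smul {k : ℕ} (c : ℝ) (α : AlternatingMap ℝ g ℝ (Fin k))
    (hα : ceD g α = 0) (h : ceD g (c • α) = 0) :
    c • cls g α hα = cls g (c • α) h := by
  show _ = Submodule.Quotient.mk _
  rw [cls, ← Submodule.Quotient.mk_smul]
  rfl

theorem smul_compLinearMap' {k : ℕ} (c : ℝ) (α : AlternatingMap ℝ g ℝ (Fin k))
    (K : g →ₗ[ℝ] g) : (c • α).compLinearMap K = c • α.compLinearMap K := by
  ext v; simp

/-- Classes with a closed representative α satisfying α∘K = s•α form a submodule. -/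
noncomputable def repSub (K : g →ₗ[ℝ] g) (s : ℝ) (k : ℕ) : Submodule ℝ (Hcoh g k) where
  carrier := {c | ∃ (α : AlternatingMap ℝ g ℝ (Fin k)) (hα : ceD g α = 0),
      α.compLinearMap K = s • α ∧ c = cls g α hα}
  zero_mem' := by
    refine ⟨0, by simpa using ceD_zero g, by simp, ?_⟩
    rw [cls]
    exact ((Submodule.Quotient.mk_eq_zero _).2 (by
      simp only [Submodule.mem_comap, Submodule.subtype_apply]
      exact (Bsub g k).zero_mem)).symm
  add_mem' := by
    rintro a b ⟨α, hα, hKα, rfl⟩ ⟨β, hβ, hKβ, rfl⟩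
    have h : ceD g (α + β) = 0 := by rw [ceD_add, hα, hβ, add_zero]
    exact ⟨α + β, h, by rw [AlternatingMap.add_compLinearMap, hKα, hKβ, smul_add],
      (cls_add g α β hα hβ h).symm⟩
  smul_mem' := by
    rintro c a ⟨α, hα, hKα, rfl⟩
    have h : ceD g (c • α) = 0 := by rw [ceD_smul, hα, smul_zero]
    exact ⟨c • α, h, by rw [smul_compLinearMap' g c α K, hKα, smul_comm],
      (cls_smul g c α hα h).symm⟩

theorem ceD_one_apply (γ : AlternatingMap ℝ g ℝ (Fin 1)) (x : Fin 2 → g) :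
    ceD g γ x = -γ ![⁅x 0, x 1⁆] := by
  simp only [ceD]
  norm_num [Fin.sum_univ_succ]
  congr 1
  funext m
  have hm : (m : ℕ) = 0 := by omega
  simp [hm]

theorem map_neg_one (γ : AlternatingMap ℝ g ℝ (Fin 1)) (z : g) :
    γ ![-z] = -γ ![z] := by
  have h1 : (![-z] : Fin 1 → g) = Function.update ![z] 0 (-z) := by
    funext i; fin_cases i <;> simp
  have h2 : (![z] : Fin 1 → g) = Function.update ![z] 0 z := by
    funext i; fin_cases i <;> simp
  rw [h1, γ.map_update_neg, ← h2]

end Aux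

noncomputable section

/-- A finite-dimensional real Lie algebra with an Abelian linear
D-complex structure is linear C∞-pure at the 2nd stage. -/
theorem abelian_Dcomplex_linear_pure_at_two
    (g : Type*) [LieRing g] [LieAlgebra ℝ g] [FiniteDimensional ℝ g]
    (n : ℕ) (hg : Module.finrank ℝ g = 2 * n)
    (p q : LieSubalgebra ℝ g)
    (hcompl : IsCompl p.toSubmodule q.toSubmodule)
    (hp : Module.finrank ℝ p.toSubmodule = n)
    (hq : Module.finrank ℝ q.toSubmodule = n)
    (habp : ∀ x ∈ p, ∀ y ∈ p, ⁅x, y⁆ = (0 : g))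
    (habq : ∀ x ∈ q, ∀ y ∈ q, ⁅x, y⁆ = (0 : g))
    (K : g →ₗ[ℝ] g)
    (hKp : ∀ x ∈ p, K x = x) (hKq : ∀ x ∈ q, K x = -x) :
    Hplus g K 2 ⊓ Hminus g K 2 = ⊥ := by
  -- every element of g splits as a sum of elements of p and q
  have hsplit : ∀ x : g, ∃ a ∈ p, ∃ b ∈ q, a + b = x := by
    intro x
    have hx : x ∈ p.toSubmodule ⊔ q.toSubmodule := by
      rw [hcompl.codisjoint.eq_top]; trivial
    obtain ⟨a, ha, b, hb, hab⟩ := Submodule.mem_sup.1 hx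
    exact ⟨a, ha, b, hb, hab⟩
  -- the key bracket identity
  have hbr : ∀ x y : g, ⁅K x, K y⁆ = -⁅x, y⁆ := by
    intro x y
    obtain ⟨a, ha, b, hb, hab⟩ := hsplit x
    obtain ⟨c, hc, d, hd, hcd⟩ := hsplit y
    have hKx : K x = a - b := by
      rw [← hab, map_add, hKp a ha, hKq b hb, sub_eq_add_neg]
    have hKy : K y = c - d := by
      rw [← hcd, map_add, hKp c hc, hKq d hd, sub_eq_add_neg]
    rw [hKx, hKy, ← hab, ← hcd]
    have h1 : ⁅a, c⁆ = 0 := habp a ha c hc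
    have h2 : ⁅b, d⁆ = 0 := habq b hb d hd
    simp only [sub_lie, lie_sub, add_lie, lie_add, h1, h2]
    abel
  rw [eq_bot_iff]
  rintro cl ⟨hcl1, hcl2⟩
  have hP : cl ∈ repSub g K 1 2 := by
    refine Submodule.span_le.2 ?_ hcl1
    rintro c ⟨α, hα, hK, rfl⟩
    exact ⟨α, hα, by rw [one_smul]; exact hK, rfl⟩
  have hQ : cl ∈ repSub g K (-1) 2 := by
    refine Submodule.span_le.2 ?_ hcl2
    rintro c ⟨α, hα, hK, rfl⟩
    exact ⟨α, hα, hK.trans (neg_one_smul ℝ α).symm, rfl⟩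
  obtain ⟨α, hα, hKα, rfl⟩ := hP
  obtain ⟨β, hβ, hKβ, hclβ⟩ := hQ
  -- the two representatives differ by an exact form
  have hdiff : α - β ∈ Bsub g 2 := by
    have h := (Submodule.Quotient.eq _).1 hclβ
    simpa only [Submodule.mem_comap, Submodule.subtype_apply, Submodule.coe_sub] using h
  obtain ⟨γ, hγ⟩ : ∃ γ : AlternatingMap ℝ g ℝ (Fin 1), ceD g γ = ⇑(α - β) := hdiff
  -- show α = 0
  have hα0 : α = 0 := by
    ext v
    have key : ∀ w : Fin 2 → g, α w - β w = -γ ![⁅w 0, w 1⁆] := by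
      intro w
      have := congrFun hγ w
      rw [ceD_one_apply] at this
      have h2 : (⇑(α - β)) w = α w - β w := by simp
      rw [h2] at this
      exact this.symm
    have e1 : α (fun i => K (v i)) = α v := by
      have := congrFun (congrArg (fun f : AlternatingMap ℝ g ℝ (Fin 2) => ⇑f) hKα) v
      simpa using this
    have e2 : β (fun i => K (v i)) = -β v := by
      have := congrFun (congrArg (fun f : AlternatingMap ℝ g ℝ (Fin 2) => ⇑f) hKβ) v
      simpa using this
    have k1 := key v
    have k2 := key (fun i => K (v i))
    rw [e1, e2] at k2
    have hb2 : ⁅K (v 0), K (v 1)⁆ = -⁅v 0, v 1⁆ := hbr (v 0) (v 1)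
    rw [hb2] at k2
    rw [map_neg_one] at k2
    simp only [AlternatingMap.zero_apply]
    linarith
  subst hα0
  rw [cls]
  exact (Submodule.Quotient.mk_eq_zero _).2 (by
    simp only [Submodule.mem_comap, Submodule.subtype_apply]
    exact (Bsub g 2).zero_mem)


end
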